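/- Fix η > 0, define φ_[0](x) = (2/π)·arctan(exp(√η·x)), and for n ≥ 1 define φ_[n](x) = ∫_{-∞}^x φ_[n-1](y) dy. Then for all n ∈ ℕ: (a) for all x ≤ 0, 0 ≤ φ_[n](x) ≤ η^(-n/2)·exp(√η·x); and (b) for all x ≥ 0, (1/2)·x^n/n! ≤ φ_[n](x) ≤ Σ_{k=0}^n η^(-(n-k)/2)·x^k/k!. -/

import Mathlib

open MeasureTheory Set Filter Topology

private lemma my_arctan_le_self {t : ℝ} (ht : 0 ≤ t) : Real.arctan t ≤ t := by
  rcases eq_or_lt_of_le ht with h | h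
  · simp [← h]
  rcases lt_or_ge t (Real.pi / 2) with h2 | h2
  · have h3 : t ≤ Real.tan t := (Real.lt_tan h h2).le
    calc Real.arctan t ≤ Real.arctan (Real.tan t) := Real.arctan_strictMono.monotone h3
      _ = t := Real.arctan_tan (by linarith [Real.pi_pos]) h2
  · exact (Real.arctan_lt_pi_div_two t).le.trans h2

private lemma my_exp_interval (s a c : ℝ) (hs : s ≠ 0) :
    ∫ y in a..c, Real.exp (s * y) = (Real.exp (s * c) - Real.exp (s * a)) / s := by
  rw [intervalIntegral.integral_comp_mul_left (f := Real.exp) hs, integral_exp]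
  rw [smul_eq_mul]
  ring

private lemma my_exp_integrableOn (s c : ℝ) (hs : 0 < s) :
    IntegrableOn (fun y => Real.exp (s * y)) (Set.Iic c) := by
  apply integrableOn_Iic_of_intervalIntegral_norm_bounded (Real.exp (s * c) / s) c
    (a := fun n : ℕ => -(n : ℝ)) (l := Filter.atTop)
  · intro i
    exact (Real.continuous_exp.comp (continuous_const.mul continuous_id)).integrableOn_Ioc
  · exact tendsto_neg_atBot_iff.mpr tendsto_natCast_atTop_atTop
  · filter_upwards with n
    simp only [Real.norm_eq_abs, abs_of_pos (Real.exp_pos _)]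
    rw [my_exp_interval s _ c hs.ne']
    have := Real.exp_pos (s * (-(n : ℝ)))
    have h2 := Real.exp_pos (s * (-(n : ℝ)))
    gcongr
    linarith

private lemma my_exp_integral (s c : ℝ) (hs : 0 < s) :
    ∫ y in Set.Iic c, Real.exp (s * y) = Real.exp (s * c) / s := by
  have hderiv : ∀ x ∈ Set.Iic c, HasDerivAt (fun y => Real.exp (s * y) / s)
      (Real.exp (s * x)) x := by
    intro x _
    have h1 : HasDerivAt (fun y : ℝ => s * y) s x := by
      simpa using (hasDerivAt_id x).const_mul s
    have h2 := (Real.hasDerivAt_exp (s * x)).comp x h1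
    have h3 := h2.div_const s
    exact h3.congr_deriv (mul_div_cancel_right₀ _ hs.ne')
  have htend : Tendsto (fun y => Real.exp (s * y) / s) atBot (𝓝 0) := by
    have h1 : Tendsto (fun y : ℝ => s * y) atBot atBot := by
      exact Tendsto.const_mul_atBot hs tendsto_id
    have := (Real.tendsto_exp_atBot.comp h1).div_const s
    simpa using this
  have := integral_Iic_of_hasDerivAt_of_tendsto' hderiv (my_exp_integrableOn s c hs) htend
  simpa using this

private lemma my_pow_integral (x : ℝ) (hx : 0 ≤ x) (a : ℝ) (k : ℕ) :
    ∫ y in Set.Ioc 0 x, a * y ^ k / (Nat.factorial k : ℝ) =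
      a * x ^ (k + 1) / (Nat.factorial (k + 1) : ℝ) := by
  rw [← intervalIntegral.integral_of_le hx]
  have h : ∀ y : ℝ, a * y ^ k / (Nat.factorial k : ℝ) = (a / (Nat.factorial k : ℝ)) * y ^ k :=
    fun y => by ring
  simp_rw [h]
  rw [intervalIntegral.integral_const_mul, integral_pow]
  have hk : (Nat.factorial k : ℝ) ≠ 0 := Nat.cast_ne_zero.mpr k.factorial_ne_zero
  have hk1 : ((Nat.factorial (k + 1) : ℕ) : ℝ) = (k + 1) * (Nat.factorial k : ℝ) := by
    rw [Nat.factorial_succ]; push_cast; ring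
  rw [hk1, zero_pow (Nat.succ_ne_zero k)]
  have hk2 : (0 : ℝ) < (k : ℝ) + 1 := by positivity
  field_simp
  ring

theorem iterated_antiderivative_growth (η : ℝ) (hη : 0 < η) (φ : ℕ → ℝ → ℝ)
    (h0 : φ 0 = fun x : ℝ => (2 / Real.pi) * Real.arctan (Real.exp (Real.sqrt η * x)))
    (hrec : ∀ n : ℕ, ∀ x : ℝ, φ (n + 1) x = ∫ y in Set.Iic x, φ n y) :
    ∀ n : ℕ,
      (∀ x : ℝ, x ≤ 0 → 0 ≤ φ n x ∧ φ n x ≤ (Real.sqrt η)⁻¹ ^ n * Real.exp (Real.sqrt η * x)) ∧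
      (∀ x : ℝ, 0 ≤ x →
        (1 / 2) * x ^ n / ((Nat.factorial n : ℕ) : ℝ) ≤ φ n x ∧
        φ n x ≤ ∑ k ∈ Finset.range (n + 1), (Real.sqrt η)⁻¹ ^ (n - k) * x ^ k / ((Nat.factorial k : ℕ) : ℝ)) := by
  have hs : 0 < Real.sqrt η := Real.sqrt_pos.mpr hη
  set s : ℝ := Real.sqrt η with hsdef
  set c : ℝ := s⁻¹ with hcdef
  have hc : 0 < c := inv_pos.mpr hs
  suffices key : ∀ n : ℕ, Measurable (φ n) ∧
      (∀ x : ℝ, x ≤ 0 → 0 ≤ φ n x ∧ φ n x ≤ c ^ n * Real.exp (s * x)) ∧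
      (∀ x : ℝ, 0 ≤ x →
        (1 / 2) * x ^ n / ((Nat.factorial n : ℕ) : ℝ) ≤ φ n x ∧
        φ n x ≤ ∑ k ∈ Finset.range (n + 1), c ^ (n - k) * x ^ k / ((Nat.factorial k : ℕ) : ℝ)) by
    exact fun n => ⟨(key n).2.1, (key n).2.2⟩
  intro n
  induction n with
  | zero =>
    have harctan_nonneg : ∀ t : ℝ, 0 ≤ t → 0 ≤ Real.arctan t := by
      intro t ht
      rw [← Real.arctan_zero]
      exact Real.arctan_strictMono.monotone ht
    refine ⟨?_, ?_, ?_⟩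
    · rw [h0]
      exact (continuous_const.mul (Real.continuous_arctan.comp
        (Real.continuous_exp.comp (continuous_const.mul continuous_id)))).measurable
    · intro x hx
      rw [h0]
      simp only
      constructor
      · exact mul_nonneg (by positivity) (harctan_nonneg _ (Real.exp_pos _).le)
      · have h1 := my_arctan_le_self (Real.exp_pos (s * x)).le
        have h2 : 2 / Real.pi ≤ 1 := by
          rw [div_le_one Real.pi_pos]; linarith [Real.pi_gt_three]
        calc 2 / Real.pi * Real.arctan (Real.exp (s * x)) ≤ 2 / Real.pi * Real.exp (s * x) :=
              mul_le_mul_of_nonneg_left h1 (by positivity)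
          _ ≤ 1 * Real.exp (s * x) := mul_le_mul_of_nonneg_right h2 (Real.exp_pos _).le
          _ = c ^ 0 * Real.exp (s * x) := by simp
    · intro x hx
      rw [h0]
      simp only
      constructor
      · have h1 : Real.pi / 4 ≤ Real.arctan (Real.exp (s * x)) := by
          rw [← Real.arctan_one]
          exact Real.arctan_strictMono.monotone (Real.one_le_exp (by positivity))
        have h2 : (1 : ℝ) / 2 = 2 / Real.pi * (Real.pi / 4) := by
          field_simp
          norm_num
        simp only [pow_zero, Nat.factorial_zero, Nat.cast_one, mul_one, div_one]
        rw [h2]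
        exact mul_le_mul_of_nonneg_left h1 (by positivity)
      · have h1 := (Real.arctan_lt_pi_div_two (Real.exp (s * x))).le
        have h2 : 2 / Real.pi * Real.arctan (Real.exp (s * x)) ≤ 1 := by
          calc 2 / Real.pi * Real.arctan (Real.exp (s * x)) ≤ 2 / Real.pi * (Real.pi / 2) :=
                mul_le_mul_of_nonneg_left h1 (by positivity)
            _ = 1 := by field_simp
        simpa using h2
  | succ n ih =>
    obtain ⟨hm, hA, hB⟩ := ih
    have hpos : ∀ y : ℝ, 0 ≤ φ n y := by
      intro y
      rcases le_total y 0 with hy | hy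
      · exact (hA y hy).1
      · refine le_trans ?_ (hB y hy).1
        positivity
    have hint : ∀ x : ℝ, IntegrableOn (φ n) (Set.Iic x) := by
      have hIic0 : ∀ x : ℝ, x ≤ 0 → IntegrableOn (φ n) (Set.Iic x) := by
        intro x hx
        apply Integrable.mono' ((my_exp_integrableOn s x hs).const_mul (c ^ n))
          hm.aestronglyMeasurable.restrict
        filter_upwards [ae_restrict_mem measurableSet_Iic] with y hy
        rw [Real.norm_eq_abs, abs_of_nonneg (hpos y)]
        exact (hA y (le_trans hy hx)).2
      intro x
      rcases le_or_gt x 0 with hx | hx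
      · exact hIic0 x hx
      · rw [← Set.Iic_union_Ioc_eq_Iic hx.le]
        apply (hIic0 0 le_rfl).union
        apply Integrable.mono'
          ((integrableOn_const
            (C := ∑ k ∈ Finset.range (n + 1), c ^ (n - k) * x ^ k / ((Nat.factorial k : ℕ) : ℝ))
            (hs := measure_Ioc_lt_top.ne)))
          hm.aestronglyMeasurable.restrict
        filter_upwards [ae_restrict_mem measurableSet_Ioc] with y hy
        rw [Real.norm_eq_abs, abs_of_nonneg (hpos y)]
        refine le_trans (hB y hy.1.le).2 (Finset.sum_le_sum fun k _ => ?_)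
        have hyx := hy.2
        have hy0 := hy.1.le
        gcongr
    have hm1 : Measurable (φ (n + 1)) := by
      have hmono : Monotone (φ (n + 1)) := by
        intro a b hab
        rw [hrec, hrec]
        exact setIntegral_mono_set (hint b) (Filter.Eventually.of_forall hpos)
          ((Set.Iic_subset_Iic.mpr hab).eventuallyLE)
      exact hmono.measurable
    have hIic_bound : ∀ x : ℝ, x ≤ 0 → ∫ y in Set.Iic x, φ n y ≤ c ^ (n + 1) * Real.exp (s * x) := by
      intro x hx
      have h1 : ∫ y in Set.Iic x, φ n y ≤ ∫ y in Set.Iic x, c ^ n * Real.exp (s * y) :=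
        setIntegral_mono_on (hint x) ((my_exp_integrableOn s x hs).const_mul _)
          measurableSet_Iic fun y hy => (hA y (le_trans hy hx)).2
      refine h1.trans ?_
      rw [integral_const_mul, my_exp_integral s x hs]
      rw [pow_succ, hcdef]
      apply le_of_eq
      rw [div_eq_mul_inv]
      ring
    refine ⟨hm1, ?_, ?_⟩
    · intro x hx
      constructor
      · rw [hrec]
        exact setIntegral_nonneg measurableSet_Iic fun y _ => hpos y
      · rw [hrec]
        exact hIic_bound x hx
    · intro x hx
      have hsplit : φ (n + 1) x = (∫ y in Set.Iic 0, φ n y) + ∫ y in Set.Ioc 0 x, φ n y := by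
        rw [hrec, ← Set.Iic_union_Ioc_eq_Iic hx]
        exact setIntegral_union (Set.Iic_disjoint_Ioc le_rfl) measurableSet_Ioc (hint 0)
          ((hint x).mono_set Set.Ioc_subset_Iic_self)
      constructor
      · have h1 : 0 ≤ ∫ y in Set.Iic 0, φ n y :=
          setIntegral_nonneg measurableSet_Iic fun y _ => hpos y
        have h2 : ∫ y in Set.Ioc 0 x, 1 / 2 * y ^ n / ((Nat.factorial n : ℕ) : ℝ) ≤
            ∫ y in Set.Ioc 0 x, φ n y := by
          apply setIntegral_mono_on ?_ ((hint x).mono_set Set.Ioc_subset_Iic_self)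
            measurableSet_Ioc fun y hy => (hB y hy.1.le).1
          exact (by fun_prop : Continuous fun y : ℝ =>
            1 / 2 * y ^ n / ((Nat.factorial n : ℕ) : ℝ)).integrableOn_Ioc
        have h3 := my_pow_integral x hx (1 / 2) n
        rw [hsplit]
        rw [h3] at h2
        linarith
      · have h1 : ∫ y in Set.Iic 0, φ n y ≤ c ^ (n + 1) := by
          have := hIic_bound 0 le_rfl
          simpa using this
        have h2 : ∫ y in Set.Ioc 0 x, φ n y ≤
            ∑ k ∈ Finset.range (n + 1), c ^ (n - k) * x ^ (k + 1) / ((Nat.factorial (k + 1) : ℕ) : ℝ) := by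
          have hgint : IntegrableOn
              (fun y => ∑ k ∈ Finset.range (n + 1), c ^ (n - k) * y ^ k / ((Nat.factorial k : ℕ) : ℝ))
              (Set.Ioc 0 x) := by
            apply Continuous.integrableOn_Ioc
            fun_prop
          have hmon := setIntegral_mono_on ((hint x).mono_set Set.Ioc_subset_Iic_self) hgint
            measurableSet_Ioc fun y hy => (hB y hy.1.le).2
          refine hmon.trans ?_
          rw [integral_finset_sum]
          · exact le_of_eq (Finset.sum_congr rfl fun k _ => my_pow_integral x hx _ k)
          · intro k _
            apply Continuous.integrableOn_Ioc
            fun_prop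
        have hsum : (∑ k ∈ Finset.range (n + 1 + 1), c ^ (n + 1 - k) * x ^ k / ((Nat.factorial k : ℕ) : ℝ)) =
            c ^ (n + 1) +
              ∑ k ∈ Finset.range (n + 1), c ^ (n - k) * x ^ (k + 1) / ((Nat.factorial (k + 1) : ℕ) : ℝ) := by
          rw [Finset.sum_range_succ']
          simp only [Nat.succ_sub_succ, Nat.sub_zero, pow_zero, Nat.factorial_zero, Nat.cast_one,
            mul_one, div_one]
          ring
        rw [hsplit, hsum]
        gcongr
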